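/- arXiv:math/0207285 — 3 statements merged into one kernel-verified Lean document; each statement's English description precedes it below -/
import Mathlib

section
/- For each dimension d ≥ 1, let Q_d = (−1/2, 1/2)^d be the open unit cube in ℝ^d centered at zero with sides parallel to the axes, and let c_d denote the best constant in the weak type (1,1) inequality for the centered Hardy–Littlewood maximal operator M_{d,Q_d}. Then c_d ≤ c_{d+1} for every d ≥ 1. -/
open MeasureTheory Set
open scoped ENNReal

/-- The open unit cube `Q_d = (-1/2, 1/2)^d` in `ℝ^d`, centered at zero with sides parallel
to the axes. -/
def unitCube (d : ℕ) : Set (Fin d → ℝ) :=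
  Set.univ.pi fun _ : Fin d => Set.Ioo (-(1/2) : ℝ) (1/2)

/-- The centered Hardy–Littlewood maximal operator on `ℝ^d` associated to a "ball" `B`:
`M_{d,B} f (x) = sup_{r>0} (1/(r^d λ^d(B))) ∫_{x + rB} |f|`. -/
noncomputable def maxOp (d : ℕ) (B : Set (Fin d → ℝ)) (f : (Fin d → ℝ) → ℝ)
    (x : Fin d → ℝ) : ℝ≥0∞ :=
  ⨆ (r : ℝ) (_ : 0 < r),
    (∫⁻ y in (fun b => x + r • b) '' B, ENNReal.ofReal |f y| ∂volume) /
      (ENNReal.ofReal (r ^ d) * volume B)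

/-- The best constant in the weak type `(1,1)` inequality for `maxOp d B`. -/
noncomputable def bestConst (d : ℕ) (B : Set (Fin d → ℝ)) : ℝ :=
  sInf {c : ℝ | 0 < c ∧ ∀ f : (Fin d → ℝ) → ℝ, Integrable f volume → ∀ α : ℝ, 0 < α →
    ENNReal.ofReal α * volume {x | ENNReal.ofReal α < maxOp d B f x} ≤
      ENNReal.ofReal (c * ∫ x, |f x|)}

open Metric
open scoped Pointwise
set_option maxHeartbeats 1000000

lemma unitCube_eq_ball (d : ℕ) : unitCube d = ball (0 : Fin d → ℝ) (1/2) := by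
  ext x
  simp only [unitCube, mem_pi, mem_univ, forall_true_left, mem_Ioo, mem_ball, dist_zero_right]
  rw [pi_norm_lt_iff (by norm_num : (0:ℝ) < 1/2)]
  simp [Real.norm_eq_abs, abs_lt]

lemma image_ball (d : ℕ) (x : Fin d → ℝ) {r : ℝ} (hr : 0 < r) :
    (fun b => x + r • b) '' ball (0 : Fin d → ℝ) (1/2) = ball x (r/2) := by
  have h1 : r • ball (0 : Fin d → ℝ) (1/2) = ball (0 : Fin d → ℝ) (r/2) := by
    rw [smul_ball hr.ne' (0 : Fin d → ℝ) (1/2), smul_zero]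
    congr 1
    simp [Real.norm_eq_abs, abs_of_pos hr]
    ring
  have : (fun b : Fin d → ℝ => x + r • b) = (fun y => x + y) ∘ (fun b => r • b) := rfl
  rw [this, image_comp]
  rw [show (fun b : Fin d → ℝ => r • b) '' ball 0 (1/2) = r • ball (0:Fin d → ℝ) (1/2) from rfl, h1]
  ext z
  simp only [mem_image, mem_ball]
  constructor
  · rintro ⟨y, hy, rfl⟩; simpa [dist_comm] using hy
  · intro hz; exact ⟨z - x, by simpa [dist_eq_norm] using hz, by ring⟩

lemma vol_ball (d : ℕ) (x : Fin d → ℝ) {s : ℝ} (hs : 0 < s) :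
    volume (ball x s) = ENNReal.ofReal ((2*s)^d) := by
  rw [Real.volume_pi_ball x hs]
  simp

noncomputable def avg (d : ℕ) (f : (Fin d → ℝ) → ℝ) (x : Fin d → ℝ) (s : ℝ) : ℝ≥0∞ :=
  (∫⁻ y in ball x s, ENNReal.ofReal |f y| ∂volume) / ENNReal.ofReal ((2*s)^d)

lemma maxOp_cube (d : ℕ) (f : (Fin d → ℝ) → ℝ) (x : Fin d → ℝ) :
    maxOp d (unitCube d) f x = ⨆ (s : ℝ) (_ : 0 < s), avg d f x s := by
  have key : ∀ r : ℝ, 0 < r →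
      (∫⁻ y in (fun b => x + r • b) '' unitCube d, ENNReal.ofReal |f y| ∂volume) /
        (ENNReal.ofReal (r ^ d) * volume (unitCube d)) = avg d f x (r/2) := by
    intro r hr
    rw [unitCube_eq_ball, image_ball d x hr, avg, vol_ball d 0 (by norm_num : (0:ℝ) < 1/2),
      show (2*(r/2):ℝ) = r by ring, show ((2*(1/2):ℝ))^d = 1 by norm_num]
    rw [ENNReal.ofReal_one, mul_one]
  rw [maxOp]
  apply le_antisymm
  · refine iSup₂_le fun r hr => ?_
    rw [key r hr]
    exact le_iSup₂ (α := ℝ≥0∞) (r/2) (by linarith)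
  · refine iSup₂_le fun s hs => ?_
    have h2s : (0:ℝ) < 2*s := by linarith
    have := key (2*s) h2s
    rw [show 2*s/2 = s by ring] at this
    rw [← this]
    exact le_iSup₂ (α := ℝ≥0∞) (2*s) h2s


section
variable (d : ℕ)
/-- The weak (1,1) inequality with constant `4^d`, proved via the Vitali covering lemma. -/
lemma weak_ineq (d : ℕ) (hd : 1 ≤ d) (f : (Fin d → ℝ) → ℝ) (hf : Integrable f volume)
    (α : ℝ) (hα : 0 < α) :
    ENNReal.ofReal α * volume {x | ENNReal.ofReal α < ⨆ (s : ℝ) (_ : 0 < s), avg d f x s} ≤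
      ENNReal.ofReal ((4:ℝ)^d * ∫ x, |f x|) := by
  classical
  set I : ℝ≥0∞ := ∫⁻ x, ENNReal.ofReal |f x| ∂volume with hIdef
  have hI : I ≠ ∞ := by
    have h := hf.hasFiniteIntegral
    rw [HasFiniteIntegral] at h
    simp_rw [← ofReal_norm, Real.norm_eq_abs] at h
    exact h.ne
  have hIof : ENNReal.ofReal (∫ x, |f x|) = I :=
    ofReal_integral_eq_lintegral_ofReal hf.abs (ae_of_all _ fun x => abs_nonneg _)
  set E := {x | ENNReal.ofReal α < ⨆ (s : ℝ) (_ : 0 < s), avg d f x s} with hE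
  -- choose radii
  have hex : ∀ x ∈ E, ∃ s : ℝ, 0 < s ∧
      ENNReal.ofReal α * volume (ball x s) < ∫⁻ y in ball x s, ENNReal.ofReal |f y| ∂volume := by
    intro x hx
    rw [hE, mem_setOf_eq, lt_iSup_iff] at hx
    obtain ⟨s, hx⟩ := hx
    rw [lt_iSup_iff] at hx
    obtain ⟨hs, hx⟩ := hx
    refine ⟨s, hs, ?_⟩
    rw [vol_ball d x hs]
    exact ENNReal.mul_lt_of_lt_div hx
  set r : (Fin d → ℝ) → ℝ := fun x => if h : x ∈ E then (hex x h).choose else 0 with hr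
  have hrpos : ∀ x ∈ E, 0 < r x := by
    intro x hx; rw [hr]; simp only [dif_pos hx]; exact (hex x hx).choose_spec.1
  have hrineq : ∀ x ∈ E, ENNReal.ofReal α * volume (ball x (r x)) <
      ∫⁻ y in ball x (r x), ENNReal.ofReal |f y| ∂volume := by
    intro x hx; rw [hr]; simp only [dif_pos hx]; exact (hex x hx).choose_spec.2
  -- radii are bounded
  have hrbound : ∀ x ∈ E, r x ≤ max 1 (I.toReal / α) := by
    intro x hx
    have h1 : ENNReal.ofReal (α * (2 * r x)^d) < I := by
      rw [ENNReal.ofReal_mul hα.le]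
      calc ENNReal.ofReal α * ENNReal.ofReal ((2 * r x)^d)
          = ENNReal.ofReal α * volume (ball x (r x)) := by rw [vol_ball d x (hrpos x hx)]
        _ < ∫⁻ y in ball x (r x), ENNReal.ofReal |f y| ∂volume := hrineq x hx
        _ ≤ I := setLIntegral_le_lintegral _ _
    have h2 : α * (2 * r x)^d ≤ I.toReal :=
      (ENNReal.ofReal_le_iff_le_toReal hI).1 h1.le
    have h3 : (2 * r x)^d ≤ I.toReal / α := by
      rw [le_div_iff₀ hα]; linarith [h2]
    rcases le_or_gt (2 * r x) 1 with h | h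
    · exact le_max_of_le_left (by linarith [hrpos x hx])
    · refine le_max_of_le_right ?_
      have h4 : 2 * r x ≤ (2 * r x)^d := le_self_pow₀ h.le (by omega)
      linarith [hrpos x hx]
  -- Vitali covering
  obtain ⟨u, huE, hdisj, hcov⟩ := Vitali.exists_disjoint_subfamily_covering_enlargement_closedBall
    E id r (max 1 (I.toReal / α)) (fun a ha => hrbound a ha) 4 (by norm_num)
  have hballdisj : u.PairwiseDisjoint (fun a => ball a (r a)) :=
    hdisj.mono fun a => ball_subset_closedBall
  have hucnt : u.Countable :=
    hballdisj.countable_of_isOpen (fun a _ => isOpen_ball)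
      (fun a ha => nonempty_ball.2 (hrpos a (huE ha)))
  have hEsub : E ⊆ ⋃ b ∈ u, closedBall b (4 * r b) := by
    intro a ha
    obtain ⟨b, hb, hsub⟩ := hcov a ha
    exact mem_iUnion₂.2 ⟨b, hb, hsub (mem_closedBall_self (hrpos a ha).le)⟩
  have hterm : ∀ b ∈ u, volume (closedBall b (4 * r b)) =
      ENNReal.ofReal ((4:ℝ)^d) * volume (ball b (r b)) := by
    intro b hb
    have hrb := hrpos b (huE hb)
    rw [Real.volume_pi_closedBall b (by linarith : (0:ℝ) ≤ 4 * r b), vol_ball d b hrb]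
    rw [← ENNReal.ofReal_mul (by positivity)]
    congr 1
    simp only [Fintype.card_fin]
    rw [← mul_pow]
    ring_nf
  haveI : Countable ↥u := hucnt.to_subtype
  have hmeas : volume E ≤ ENNReal.ofReal ((4:ℝ)^d) * ∑' b : u, volume (ball (b:Fin d → ℝ) (r b)) := by
    calc volume E ≤ ∑' b : u, volume (closedBall (b : Fin d → ℝ) (4 * r (b : Fin d → ℝ))) :=
          (measure_mono hEsub).trans (measure_biUnion_le volume hucnt _)
      _ = ∑' b : u, ENNReal.ofReal ((4:ℝ)^d) * volume (ball (b:Fin d → ℝ) (r b)) := by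
          exact tsum_congr fun b => hterm b b.2
      _ = _ := ENNReal.tsum_mul_left
  have hsum : ∑' b : u, (∫⁻ y in ball (b : Fin d → ℝ) (r (b:Fin d → ℝ)), ENNReal.ofReal |f y| ∂volume) ≤ I := by
    rw [← lintegral_iUnion (fun b : u => measurableSet_ball)
      (fun i j hij => hballdisj i.2 j.2 (Subtype.coe_ne_coe.2 hij))]
    exact setLIntegral_le_lintegral _ _
  calc ENNReal.ofReal α * volume E
      ≤ ENNReal.ofReal α * (ENNReal.ofReal ((4:ℝ)^d) * ∑' b : u, volume (ball (b:Fin d → ℝ) (r b))) := by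
        exact mul_le_mul_right hmeas _
    _ = ENNReal.ofReal ((4:ℝ)^d) * ∑' b : u, ENNReal.ofReal α * volume (ball (b:Fin d → ℝ) (r b)) := by
        rw [ENNReal.tsum_mul_left]; ring
    _ ≤ ENNReal.ofReal ((4:ℝ)^d) * ∑' b : u, (∫⁻ y in ball (b : Fin d → ℝ) (r (b:Fin d → ℝ)), ENNReal.ofReal |f y| ∂volume) := by
        gcongr with b
        exact (hrineq b.1 (huE b.2)).le
    _ ≤ ENNReal.ofReal ((4:ℝ)^d) * I := mul_le_mul_right hsum _
    _ = ENNReal.ofReal ((4:ℝ)^d * ∫ x, |f x|) := by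
        rw [ENNReal.ofReal_mul (by positivity), hIof]
noncomputable abbrev ee (d : ℕ) :=
  MeasurableEquiv.piFinSuccAbove (fun _ : Fin (d+1) => ℝ) (Fin.last d)


lemma ee_apply (y : Fin (d+1) → ℝ) :
    (ee d) y = (y (Fin.last d), fun j => y (Fin.castSucc j)) := by
  simp [MeasurableEquiv.piFinSuccAbove, Fin.succAbove_last]
  rfl

lemma pi_ball_preimage (y : Fin (d+1) → ℝ) {s : ℝ} (hs : 0 < s) :
    ball y s = (ee d) ⁻¹' ((ball (y (Fin.last d)) s) ×ˢ (ball (fun j => y (Fin.castSucc j)) s)) := by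
  ext z
  simp only [mem_preimage, ee_apply, mem_prod, mem_ball]
  rw [dist_pi_lt_iff hs, dist_pi_lt_iff hs]
  constructor
  · intro h
    exact ⟨h (Fin.last d), fun j => h (Fin.castSucc j)⟩
  · rintro ⟨h1, h2⟩ i
    induction i using Fin.lastCases with
    | last => exact h1
    | cast j => exact h2 j

/-- the transferred function -/
noncomputable def tens (d : ℕ) (f : (Fin d → ℝ) → ℝ) (L : ℝ) : (Fin (d+1) → ℝ) → ℝ :=
  fun y => (Set.Ioo (-(L/2)) (L/2)).indicator (fun _ => (1:ℝ)) (y (Fin.last d)) *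
    f (fun j => y (Fin.castSucc j))

noncomputable def tG (d : ℕ) (f : (Fin d → ℝ) → ℝ) (L : ℝ) : ℝ × (Fin d → ℝ) → ℝ :=
  fun p => (Set.Ioo (-(L/2)) (L/2)).indicator (fun _ => (1:ℝ)) p.1 * f p.2

lemma tens_eq (f : (Fin d → ℝ) → ℝ) (L : ℝ) : tens d f L = tG d f L ∘ (ee d) := by
  funext y
  simp only [Function.comp_apply, ee_apply, tG, tens]

lemma mp_ee : MeasurePreserving (ee d) volume volume := by
  have := measurePreserving_piFinSuccAbove (fun _ : Fin (d+1) => (volume : Measure ℝ)) (Fin.last d)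
  simpa [volume_pi, Measure.volume_eq_prod] using this

lemma indIntegrable (L : ℝ) :
    Integrable ((Set.Ioo (-(L/2)) (L/2)).indicator (fun _ => (1:ℝ))) volume := by
  rw [integrable_indicator_iff measurableSet_Ioo]
  exact integrableOn_const measure_Ioo_lt_top.ne

lemma tG_integrable (f : (Fin d → ℝ) → ℝ) (hf : Integrable f volume) (L : ℝ) :
    Integrable (tG d f L) volume := by
  rw [Measure.volume_eq_prod]
  exact (indIntegrable L).mul_prod hf

lemma tens_integrable (f : (Fin d → ℝ) → ℝ) (hf : Integrable f volume) (L : ℝ) :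
    Integrable (tens d f L) volume := by
  rw [tens_eq]
  exact ((mp_ee d).integrable_comp_emb (ee d).measurableEmbedding).2 (tG_integrable d f hf L)

lemma tens_integral (f : (Fin d → ℝ) → ℝ) (hf : Integrable f volume) {L : ℝ} (hL : 0 ≤ L) :
    ∫ y, |tens d f L y| ∂volume = L * ∫ x, |f x| ∂volume := by
  rw [tens_eq]
  have h1 : ∫ y, |(tG d f L ∘ ee d) y| ∂volume = ∫ p, |tG d f L p| ∂volume :=
    (mp_ee d).integral_comp' (fun p => |tG d f L p|)
  rw [h1, Measure.volume_eq_prod]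
  have h2 : ∀ p : ℝ × (Fin d → ℝ), |tG d f L p| =
      (Set.Ioo (-(L/2)) (L/2)).indicator (fun _ => (1:ℝ)) p.1 * |f p.2| := by
    intro p
    rw [tG, abs_mul]
    congr 1
    rw [abs_of_nonneg (Set.indicator_nonneg (fun _ _ => zero_le_one) _)]
  simp_rw [h2]
  rw [integral_prod_mul ((Set.Ioo (-(L/2)) (L/2)).indicator (fun _ => (1:ℝ))) (fun x => |f x|)]
  congr 1
  rw [integral_indicator_const _ measurableSet_Ioo]
  simp only [Real.volume_Ioo, smul_eq_mul, mul_one]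
  rw [measureReal_def, Real.volume_Ioo, show (L/2 - -(L/2) : ℝ) = L by ring, ENNReal.toReal_ofReal hL]

lemma avg_tens (f : (Fin d → ℝ) → ℝ) (hf : Integrable f volume) {L s : ℝ} (hs : 0 < s)
    (y : Fin (d+1) → ℝ)
    (hsub : ball (y (Fin.last d)) s ⊆ Set.Ioo (-(L/2)) (L/2)) :
    avg (d+1) (tens d f L) y s = avg d f (fun j => y (Fin.castSucc j)) s := by
  have habs : ∀ p : ℝ × (Fin d → ℝ), ENNReal.ofReal |tG d f L p| =
      ENNReal.ofReal ((Set.Ioo (-(L/2)) (L/2)).indicator (fun _ => (1:ℝ)) p.1) *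
        ENNReal.ofReal |f p.2| := by
    intro p
    rw [tG, abs_mul, abs_of_nonneg (Set.indicator_nonneg (fun _ _ => zero_le_one) _),
      ENNReal.ofReal_mul (Set.indicator_nonneg (fun _ _ => zero_le_one) _)]
  have hnum : (∫⁻ z in ball y s, ENNReal.ofReal |tens d f L z| ∂volume) =
      ENNReal.ofReal (2*s) *
        ∫⁻ x in ball (fun j => y (Fin.castSucc j)) s, ENNReal.ofReal |f x| ∂volume := by
    rw [pi_ball_preimage d y hs, tens_eq]
    have h1 := (mp_ee d).setLIntegral_comp_preimage_emb (ee d).measurableEmbedding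
      (fun p => ENNReal.ofReal |tG d f L p|)
      ((ball (y (Fin.last d)) s) ×ˢ (ball (fun j => y (Fin.castSucc j)) s))
    rw [show (fun z => ENNReal.ofReal |(tG d f L ∘ (ee d)) z|) =
      (fun z => ENNReal.ofReal |tG d f L ((ee d) z)|) from rfl]
    rw [h1, Measure.volume_eq_prod, ← Measure.prod_restrict]
    simp_rw [habs]
    rw [lintegral_prod_mul
      (f := fun t => ENNReal.ofReal ((Set.Ioo (-(L/2)) (L/2)).indicator (fun _ => (1:ℝ)) t))
      (g := fun x => ENNReal.ofReal |f x|)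
      (((measurable_one.indicator measurableSet_Ioo)).ennreal_ofReal.aemeasurable)
      ((hf.abs.aemeasurable).ennreal_ofReal.restrict)]
    congr 1
    have hcong : (∫⁻ t in ball (y (Fin.last d)) s,
        ENNReal.ofReal ((Set.Ioo (-(L/2)) (L/2)).indicator (fun _ => (1:ℝ)) t) ∂volume) =
        ∫⁻ _ in ball (y (Fin.last d)) s, (1:ℝ≥0∞) ∂volume := by
      refine setLIntegral_congr_fun measurableSet_ball
        (fun t (ht : t ∈ ball (y (Fin.last d)) s) => ?_)
      rw [Set.indicator_of_mem (hsub ht)]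
      norm_num
    rw [hcong, setLIntegral_one, Real.volume_ball]
  rw [avg, avg, hnum, pow_succ, mul_comm ((2*s)^d) (2*s),
    ENNReal.ofReal_mul (by linarith : (0:ℝ) ≤ 2*s)]
  rw [ENNReal.mul_div_mul_left _ _ (by positivity) ENNReal.ofReal_ne_top]

end

noncomputable def Mtr (d : ℕ) (R : ℝ) (f : (Fin d → ℝ) → ℝ) (x : Fin d → ℝ) : ℝ≥0∞ :=
  ⨆ (s : ℝ) (_ : 0 < s) (_ : s ≤ R), avg d f x s

lemma key_bound (d : ℕ) {c : ℝ}
    (hc : ∀ g : (Fin (d+1) → ℝ) → ℝ, Integrable g volume → ∀ α : ℝ, 0 < α →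
      ENNReal.ofReal α * volume {y | ENNReal.ofReal α < maxOp (d+1) (unitCube (d+1)) g y} ≤
        ENNReal.ofReal (c * ∫ y, |g y|))
    (hcpos : 0 < c)
    (f : (Fin d → ℝ) → ℝ) (hf : Integrable f volume) {α : ℝ} (hα : 0 < α)
    {R : ℝ} (hR : 0 < R) :
    ENNReal.ofReal α * volume {x | ENNReal.ofReal α < Mtr d R f x} ≤
      ENNReal.ofReal (c * ∫ x, |f x|) := by
  set F : ℝ := ∫ x, |f x| with hFdef
  have hF : 0 ≤ F := integral_nonneg fun x => abs_nonneg _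
  set A := {x | ENNReal.ofReal α < Mtr d R f x} with hA
  have step : ∀ n : ℕ,
      ENNReal.ofReal α * (ENNReal.ofReal ((n:ℝ)+1) * volume A) ≤
        ENNReal.ofReal (c * ((2*R + ((n:ℝ)+1)) * F)) := by
    intro n
    set L : ℝ := 2*R + ((n:ℝ)+1) with hLdef
    have hL : 0 < L := by positivity
    have hLR : 0 < L/2 - R := by
      rw [hLdef]; push_cast; linarith
    set g := tens d f L with hg
    have hgint : Integrable g volume := tens_integrable d f hf L
    have hsubset : (ee d) ⁻¹' ((Set.Ioo (-(L/2 - R)) (L/2 - R)) ×ˢ A) ⊆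
        {y | ENNReal.ofReal α < maxOp (d+1) (unitCube (d+1)) g y} := by
      intro y hy
      rw [mem_preimage, ee_apply, mem_prod] at hy
      obtain ⟨ht, hx⟩ := hy
      rw [mem_Ioo] at ht
      rw [hA, mem_setOf_eq, Mtr, lt_iSup_iff] at hx
      obtain ⟨s, hx⟩ := hx
      rw [lt_iSup_iff] at hx
      obtain ⟨hs0, hx⟩ := hx
      rw [lt_iSup_iff] at hx
      obtain ⟨hsR, hx⟩ := hx
      have hsub : ball (y (Fin.last d)) s ⊆ Set.Ioo (-(L/2)) (L/2) := by
        intro z hz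
        rw [mem_ball, Real.dist_eq] at hz
        have := abs_lt.1 hz
        rw [mem_Ioo]
        constructor <;> nlinarith [ht.1, ht.2]
      have havg := avg_tens d f hf hs0 y hsub
      rw [mem_setOf_eq, maxOp_cube]
      refine lt_of_lt_of_le ?_ (le_iSup₂ (α := ℝ≥0∞) s hs0)
      rw [havg]
      exact hx
    have hmeasA : volume ((ee d) ⁻¹' ((Set.Ioo (-(L/2 - R)) (L/2 - R)) ×ˢ A)) =
        ENNReal.ofReal ((n:ℝ)+1) * volume A := by
      rw [(mp_ee d).measure_preimage_equiv, Measure.volume_eq_prod, Measure.prod_prod,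
        Real.volume_Ioo]
      congr 2
      rw [hLdef]; push_cast; ring
    have hint : ∫ y, |g y| ∂volume = L * F := tens_integral d f hf hL.le
    calc ENNReal.ofReal α * (ENNReal.ofReal ((n:ℝ)+1) * volume A)
        = ENNReal.ofReal α * volume ((ee d) ⁻¹' ((Set.Ioo (-(L/2 - R)) (L/2 - R)) ×ˢ A)) := by
          rw [hmeasA]
      _ ≤ ENNReal.ofReal α *
            volume {y | ENNReal.ofReal α < maxOp (d+1) (unitCube (d+1)) g y} := by
          exact mul_le_mul_right (measure_mono hsubset) _
      _ ≤ ENNReal.ofReal (c * ∫ y, |g y|) := hc g hgint α hα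
      _ = ENNReal.ofReal (c * (L * F)) := by rw [hint]
  -- volume A is finite
  have hVfin : volume A ≠ ∞ := by
    intro hV
    have h0 := step 0
    rw [hV] at h0
    simp only [Nat.cast_zero, zero_add, ENNReal.ofReal_one, one_mul] at h0
    rw [ENNReal.mul_top (ENNReal.ofReal_pos.2 hα).ne'] at h0
    exact (h0.trans_lt ENNReal.ofReal_lt_top).ne rfl
  set v : ℝ := (volume A).toReal with hv
  have hvnn : 0 ≤ v := ENNReal.toReal_nonneg
  have hVv : volume A = ENNReal.ofReal v := (ENNReal.ofReal_toReal hVfin).symm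
  have hreal : ∀ n : ℕ, α * (((n:ℝ)+1) * v) ≤ c * ((2*R + ((n:ℝ)+1)) * F) := by
    intro n
    have h := step n
    rw [hVv, ← ENNReal.ofReal_mul (by positivity), ← ENNReal.ofReal_mul hα.le] at h
    exact (ENNReal.ofReal_le_ofReal_iff (by positivity)).1 h
  have hfinal : α * v ≤ c * F := by
    refine le_of_forall_pos_le_add fun ε hε => ?_
    obtain ⟨n, hn⟩ := exists_nat_gt (c * (2*R) * F / ε)
    have hn1 : c * (2*R) * F < ε * ((n:ℝ)+1) := by
      rw [div_lt_iff₀ hε] at hn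
      nlinarith
    have h := hreal n
    have hnpos : (0:ℝ) < (n:ℝ)+1 := by positivity
    have : α * v * ((n:ℝ)+1) ≤ (c * F + ε) * ((n:ℝ)+1) := by nlinarith
    exact le_of_mul_le_mul_right this hnpos
  calc ENNReal.ofReal α * volume A = ENNReal.ofReal (α * v) := by
        rw [hVv, ENNReal.ofReal_mul hα.le]
    _ ≤ ENNReal.ofReal (c * F) := ENNReal.ofReal_le_ofReal hfinal

lemma mem_const_set_succ (d : ℕ) {c : ℝ}
    (hc : c ∈ {c : ℝ | 0 < c ∧ ∀ f : (Fin (d+1) → ℝ) → ℝ, Integrable f volume → ∀ α : ℝ, 0 < α →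
      ENNReal.ofReal α * volume {x | ENNReal.ofReal α < maxOp (d+1) (unitCube (d+1)) f x} ≤
        ENNReal.ofReal (c * ∫ x, |f x|)}) :
    c ∈ {c : ℝ | 0 < c ∧ ∀ f : (Fin d → ℝ) → ℝ, Integrable f volume → ∀ α : ℝ, 0 < α →
      ENNReal.ofReal α * volume {x | ENNReal.ofReal α < maxOp d (unitCube d) f x} ≤
        ENNReal.ofReal (c * ∫ x, |f x|)} := by
  obtain ⟨hcpos, hcw⟩ := hc
  refine ⟨hcpos, fun f hf α hα => ?_⟩
  have hE : {x | ENNReal.ofReal α < maxOp d (unitCube d) f x} =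
      ⋃ n : ℕ, {x | ENNReal.ofReal α < Mtr d ((n:ℝ)+1) f x} := by
    ext x
    simp only [mem_setOf_eq, mem_iUnion, maxOp_cube]
    constructor
    · intro h
      rw [lt_iSup_iff] at h
      obtain ⟨s, h⟩ := h
      rw [lt_iSup_iff] at h
      obtain ⟨hs, h⟩ := h
      obtain ⟨n, hn⟩ := exists_nat_ge s
      refine ⟨n, lt_of_lt_of_le h ?_⟩
      rw [Mtr]
      refine le_iSup₂_of_le s hs ?_
      rw [iSup_pos (show s ≤ (n:ℝ)+1 by linarith)]
    · rintro ⟨n, hn⟩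
      refine lt_of_lt_of_le hn ?_
      rw [Mtr]
      exact iSup₂_le fun s hs => iSup_le fun _ => le_iSup₂ (α := ℝ≥0∞) s hs
  have hmono : Monotone fun n : ℕ => {x | ENNReal.ofReal α < Mtr d ((n:ℝ)+1) f x} := by
    intro n m hnm x hx
    rw [mem_setOf_eq] at hx ⊢
    refine lt_of_lt_of_le hx ?_
    rw [Mtr, Mtr]
    refine iSup₂_le fun s hs => iSup_le fun hsle => ?_
    refine le_iSup₂_of_le s hs ?_
    rw [iSup_pos (show s ≤ (m:ℝ)+1 by
      have : (n:ℝ) ≤ m := Nat.cast_le.2 hnm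
      linarith)]
  rw [hE, hmono.measure_iUnion, ENNReal.mul_iSup]
  exact iSup_le fun n => key_bound d hcw hcpos f hf hα (by positivity)

/-- With `c_d` the best constant in the weak type `(1,1)` inequality for
the centered Hardy–Littlewood maximal operator associated to the open unit cube
`Q_d = (-1/2,1/2)^d`, one has `c_d ≤ c_{d+1}` for every `d ≥ 1`. -/
theorem bestConst_cube_mono (d : ℕ) (hd : 1 ≤ d) :
    bestConst d (unitCube d) ≤ bestConst (d + 1) (unitCube (d + 1)) := by
  rw [bestConst, bestConst]
  refine csInf_le_csInf ⟨0, fun c hc => hc.1.le⟩ ?_ ?_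
  · refine ⟨(4:ℝ)^(d+1), (by positivity : (0:ℝ) < (4:ℝ)^(d+1)), fun f hf α hα => ?_⟩
    have := weak_ineq (d+1) (by omega) f hf α hα
    simp_rw [maxOp_cube]
    exact this
  · intro c hc
    exact mem_const_set_succ d hc
end

section
/- For each d ∈ ℕ∖{0}, let B_d ⊂ ℝ^d be a d-dimensional open parallelotope centered at zero (i.e., the image of the open unit cube (−1/2,1/2)^d under an invertible linear transformation of ℝ^d). Then the best constants in the weak type (1,1) inequality for the centered Hardy–Littlewood maximal operators satisfy c_{d,B_d} ≤ c_{d+1,B_{d+1}} for every d ≥ 1. -/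
open MeasureTheory Set
open scoped ENNReal

open Metric

section basic
variable {n : ℕ}

lemma volume_unitCube (n : ℕ) : volume (unitCube n) = 1 := by
  rw [unitCube, volume_pi_pi]
  simp [Real.volume_Ioo]
  norm_num

lemma ball_eq_pi (x : Fin n → ℝ) {s : ℝ} (hs : 0 < s) :
    ball x s = univ.pi fun i => Ioo (x i - s) (x i + s) := by
  rw [ball_pi _ hs]
  simp [Real.ball_eq_Ioo]

lemma volume_ball_pi (x : Fin n → ℝ) {s : ℝ} (hs : 0 < s) :
    volume (ball x s) = ENNReal.ofReal ((2 * s) ^ n) := by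
  rw [ball_eq_pi x hs, volume_pi_pi]
  have : ∀ i : Fin n, volume (Ioo (x i - s) (x i + s)) = ENNReal.ofReal (2 * s) := by
    intro i; rw [Real.volume_Ioo]; ring_nf
  simp only [this, Finset.prod_const, Finset.card_univ, Fintype.card_fin]
  rw [← ENNReal.ofReal_pow (by positivity)]

lemma image_add_smul_unitCube (x : Fin n → ℝ) {r : ℝ} (hr : 0 < r) :
    (fun b => x + r • b) '' unitCube n = ball x (r / 2) := by
  rw [ball_eq_pi x (by positivity)]
  ext y
  constructor
  · rintro ⟨b, hb, rfl⟩ i hi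
    have hbi := hb i (mem_univ i)
    simp only [mem_Ioo] at hbi ⊢
    simp only [Pi.add_apply, Pi.smul_apply, smul_eq_mul]
    constructor <;> nlinarith [hbi.1, hbi.2]
  · intro hy
    refine ⟨r⁻¹ • (y - x), fun i _ => ?_, ?_⟩
    · have hyi := hy i (mem_univ i)
      simp only [mem_Ioo] at hyi ⊢
      simp only [Pi.smul_apply, Pi.sub_apply, smul_eq_mul]
      constructor
      · rw [inv_mul_eq_div, lt_div_iff₀ hr]; nlinarith [hyi.1]
      · rw [inv_mul_eq_div, div_lt_iff₀ hr]; nlinarith [hyi.2]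
    · funext i
      simp [smul_smul, mul_inv_cancel₀ hr.ne']

/-- `maxOp` over the unit cube as a sup of ball averages. -/
lemma maxOp_unitCube (f : (Fin n → ℝ) → ℝ) (x : Fin n → ℝ) :
    maxOp n (unitCube n) f x =
      ⨆ (s : ℝ) (_ : 0 < s),
        (∫⁻ y in ball x s, ENNReal.ofReal |f y| ∂volume) / volume (ball x s) := by
  rw [maxOp]
  apply le_antisymm
  · refine iSup₂_le fun r hr => ?_
    refine le_trans (le_of_eq ?_) (le_iSup₂ (r / 2) (by positivity))
    rw [image_add_smul_unitCube x hr, volume_unitCube, mul_one,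
      volume_ball_pi x (by positivity : (0:ℝ) < r / 2)]
    ring_nf
  · refine iSup₂_le fun s hs => ?_
    refine le_trans (le_of_eq ?_) (le_iSup₂ (2 * s) (by positivity))
    rw [image_add_smul_unitCube x (by positivity : (0:ℝ) < 2 * s), volume_unitCube, mul_one,
      volume_ball_pi x hs]
    norm_num

end basic


lemma maxOp_def (d : ℕ) (B : Set (Fin d → ℝ)) (f : (Fin d → ℝ) → ℝ) (x : Fin d → ℝ) :
  maxOp d B f x = ⨆ (r : ℝ) (_ : 0 < r),
    (∫⁻ y in (fun b => x + r • b) '' B, ENNReal.ofReal |f y| ∂volume) /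
      (ENNReal.ofReal (r ^ d) * volume B) := rfl

def weakSet (n : ℕ) (B : Set (Fin n → ℝ)) : Set ℝ :=
  {c : ℝ | 0 < c ∧ ∀ f : (Fin n → ℝ) → ℝ, Integrable f volume → ∀ α : ℝ, 0 < α →
    ENNReal.ofReal α * volume {x | ENNReal.ofReal α < maxOp n B f x} ≤
      ENNReal.ofReal (c * ∫ x, |f x|)}

lemma mem_weakSet_iff {n : ℕ} {B : Set (Fin n → ℝ)} {c : ℝ} :
  c ∈ weakSet n B ↔ (0 < c ∧ ∀ f : (Fin n → ℝ) → ℝ, Integrable f volume → ∀ α : ℝ, 0 < α →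
    ENNReal.ofReal α * volume {x | ENNReal.ofReal α < maxOp n B f x} ≤
      ENNReal.ofReal (c * ∫ x, |f x|)) := Iff.rfl

lemma bestConst_eq (d : ℕ) (B : Set (Fin d → ℝ)) : bestConst d B = sInf (weakSet d B) := rfl


section partB
variable {n : ℕ}

lemma volume_closedBall_pi (x : Fin n → ℝ) {s : ℝ} (hs : 0 ≤ s) :
    volume (closedBall x s) = ENNReal.ofReal ((2 * s) ^ n) := by
  rw [closedBall_pi _ hs, volume_pi_pi]
  have : ∀ i : Fin n, volume (closedBall (x i) s) = ENNReal.ofReal (2 * s) := by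
    intro i; rw [Real.closedBall_eq_Icc, Real.volume_Icc]; ring_nf
  simp only [this, Finset.prod_const, Finset.card_univ, Fintype.card_fin]
  rw [← ENNReal.ofReal_pow (by positivity)]

/-- Weak (1,1) inequality for the cube maximal operator, with constant `4^n`. -/
lemma pow_mem_weakSet (hn : 1 ≤ n) : (4:ℝ)^n ∈ weakSet n (unitCube n) := by
  refine ⟨by positivity, fun f hf α hα => ?_⟩
  set g : (Fin n → ℝ) → ℝ≥0∞ := fun y => ENNReal.ofReal |f y| with hg
  have hI : ∫⁻ y, g y ∂volume = ENNReal.ofReal (∫ x, |f x|) :=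
    (ofReal_integral_eq_lintegral_ofReal hf.abs
      (Filter.Eventually.of_forall fun y => abs_nonneg _)).symm
  set Ir : ℝ := ∫ x, |f x| with hIr
  have hIr0 : 0 ≤ Ir := integral_nonneg fun x => abs_nonneg _
  set E := {x | ENNReal.ofReal α < maxOp n (unitCube n) f x} with hE
  -- choose radii
  have key : ∀ x ∈ E, ∃ s, 0 < s ∧
      ENNReal.ofReal α * volume (ball x s) < ∫⁻ y in ball x s, g y ∂volume := by
    intro x hx
    rw [hE, mem_setOf_eq, maxOp_unitCube] at hx
    rw [lt_iSup_iff] at hx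
    obtain ⟨s, hx⟩ := hx
    rw [lt_iSup_iff] at hx
    obtain ⟨hs, hlt⟩ := hx
    refine ⟨s, hs, ?_⟩
    rw [ENNReal.lt_div_iff_mul_lt (Or.inl ?_) (Or.inl ?_)] at hlt
    · exact hlt
    · rw [volume_ball_pi x hs]; simpa using by positivity
    · rw [volume_ball_pi x hs]; exact ENNReal.ofReal_ne_top
  choose! ρ hρpos hρlt using key
  -- radii are bounded
  have hρle : ∀ x ∈ E, ρ x ≤ max 1 (Ir / α) := by
    intro x hx
    have h1 : ENNReal.ofReal α * ENNReal.ofReal ((2 * ρ x) ^ n) ≤ ENNReal.ofReal Ir := by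
      rw [← volume_ball_pi x (hρpos x hx)]
      exact le_trans (hρlt x hx).le (by rw [← hI]; exact setLIntegral_le_lintegral _ _)
    rw [← ENNReal.ofReal_mul hα.le] at h1
    have h2 : α * (2 * ρ x) ^ n ≤ Ir :=
      le_trans (ENNReal.ofReal_le_ofReal_iff hIr0 |>.mp h1) le_rfl
    rcases le_or_gt (2 * ρ x) 1 with h | h
    · exact le_max_of_le_left (by linarith)
    · have h3 : 2 * ρ x ≤ (2 * ρ x) ^ n := le_self_pow₀ h.le (by omega)
      have h4 : α * (2 * ρ x) ≤ Ir := le_trans (by nlinarith) h2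
      refine le_max_of_le_right ?_
      rw [le_div_iff₀ hα]
      nlinarith
  -- Vitali
  obtain ⟨u, huE, hudisj, hucov⟩ :=
    Vitali.exists_disjoint_subfamily_covering_enlargement_closedBall E id ρ
      (max 1 (Ir / α)) hρle 4 (by norm_num)
  have hucnt : u.Countable := by
    refine hudisj.countable_of_nonempty_interior fun b hb => ?_
    refine Nonempty.mono ball_subset_interior_closedBall ?_
    exact nonempty_ball.2 (hρpos b (huE hb))
  have hEsub : E ⊆ ⋃ b ∈ u, closedBall b (4 * ρ b) := by
    intro a ha
    obtain ⟨b, hb, hsub⟩ := hucov a ha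
    exact mem_biUnion hb (hsub (mem_closedBall_self (hρpos a ha).le))
  calc ENNReal.ofReal α * volume E
      ≤ ENNReal.ofReal α * ∑' b : u, volume (closedBall (b : Fin n → ℝ) (4 * ρ b)) := by
        gcongr
        exact le_trans (measure_mono hEsub) (measure_biUnion_le volume hucnt _)
    _ = ∑' b : u, ENNReal.ofReal α * volume (closedBall (b : Fin n → ℝ) (4 * ρ b)) :=
        ENNReal.tsum_mul_left.symm
    _ ≤ ∑' b : u, ENNReal.ofReal ((4:ℝ)^n) * (∫⁻ y in ball (b : Fin n → ℝ) (ρ b), g y ∂volume) := by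
        refine ENNReal.tsum_le_tsum fun b => ?_
        have hbpos := hρpos b (huE b.2)
        rw [volume_closedBall_pi _ (by positivity)]
        have : ((2 * (4 * ρ (b:Fin n → ℝ))) ^ n : ℝ) = 4^n * (2 * ρ b)^n := by
          rw [show (2 * (4 * ρ (b:Fin n → ℝ))) = 4 * (2 * ρ (b:Fin n → ℝ)) by ring, mul_pow]
        rw [this, ENNReal.ofReal_mul (by positivity), ← mul_assoc,
          mul_comm (ENNReal.ofReal α) (ENNReal.ofReal ((4:ℝ)^n)), mul_assoc]
        gcongr
        rw [← volume_ball_pi _ hbpos]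
        exact (hρlt b (huE b.2)).le
    _ = ENNReal.ofReal ((4:ℝ)^n) * ∑' b : u, (∫⁻ y in ball (b : Fin n → ℝ) (ρ b), g y ∂volume) :=
        ENNReal.tsum_mul_left
    _ ≤ ENNReal.ofReal ((4:ℝ)^n) * ∫⁻ y, g y ∂volume := by
        gcongr
        have := hucnt.to_subtype
        rw [← lintegral_iUnion (fun b : u => measurableSet_ball)
          (fun b c hbc => ?_) g]
        · exact setLIntegral_le_lintegral _ _
        · exact (hudisj b.2 c.2 (Subtype.coe_ne_coe.mpr hbc)).mono
            ball_subset_closedBall ball_subset_closedBall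
    _ = ENNReal.ofReal ((4:ℝ)^n * Ir) := by
        rw [hI, ← ENNReal.ofReal_mul (by positivity)]
end partB

section partC
variable {n : ℕ}

/-- Sup-metric balls in `ℝ^{n+1}` split as products under `piFinSuccAbove`. -/
lemma ball_succ_eq (z : Fin (n+1) → ℝ) {s : ℝ} (hs : 0 < s) :
    ball z s = (MeasurableEquiv.piFinSuccAbove (fun _ : Fin (n+1) => ℝ) 0) ⁻¹'
      (Ioo (z 0 - s) (z 0 + s) ×ˢ ball (Fin.tail z) s) := by
  ext w
  rw [ball_eq_pi z hs]
  rw [mem_preimage, MeasurableEquiv.piFinSuccAbove_apply, Set.mem_prod]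
  rw [ball_eq_pi (Fin.tail z) hs]
  simp only [mem_pi, mem_univ, forall_true_left, Fin.forall_fin_succ, Fin.tail]
  rfl

/-- The key step: a constant valid in dimension `n+1` is valid in dimension `n`. -/
lemma weakSet_succ_subset (hn : 1 ≤ n) :
    weakSet (n+1) (unitCube (n+1)) ⊆ weakSet n (unitCube n) := by
  intro c hc
  rw [mem_weakSet_iff] at hc
  obtain ⟨hc0, hweak⟩ := hc
  rw [mem_weakSet_iff]
  refine ⟨hc0, fun f hf α hα => ?_⟩
  set g : (Fin n → ℝ) → ℝ≥0∞ := fun y => ENNReal.ofReal |f y| with hg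
  set Ir : ℝ := ∫ x, |f x| with hIr
  have hIr0 : 0 ≤ Ir := integral_nonneg fun x => abs_nonneg _
  set Z : ℝ≥0∞ := ENNReal.ofReal (c * Ir) with hZ
  -- truncated level sets
  set E : ℝ → Set (Fin n → ℝ) := fun R => {x | ∃ s, 0 < s ∧ s < R ∧
    ENNReal.ofReal α * volume (ball x s) < ∫⁻ y in ball x s, g y ∂volume} with hEdef
  -- Main step: for each R > 0, `ofReal α * volume (E R) ≤ Z`.
  have main : ∀ R : ℝ, 0 < R → ENNReal.ofReal α * volume (E R) ≤ Z := by
    intro R hR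
    set e := MeasurableEquiv.piFinSuccAbove (fun _ : Fin (n+1) => ℝ) 0 with he
    have ep : MeasurePreserving e volume volume := volume_preserving_piFinSuccAbove _ 0
    have key : ∀ L : ℝ, 2*R < L →
        ENNReal.ofReal (L - 2*R) * (ENNReal.ofReal α * volume (E R)) ≤
          ENNReal.ofReal L * Z := by
      intro L hL
      have hL0 : 0 < L := by linarith
      set H : ℝ × (Fin n → ℝ) → ℝ :=
        fun p => (Ioo (-(L/2)) (L/2)).indicator (fun _ => (1:ℝ)) p.1 * f p.2 with hH
      set F : (Fin (n+1) → ℝ) → ℝ := fun z => H (e z) with hF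
      -- Integrability of H and F
      have hHint : Integrable H (volume : Measure (ℝ × (Fin n → ℝ))) := by
        rw [hH, Measure.volume_eq_prod]
        exact Integrable.mul_prod
          ((integrable_indicator_iff measurableSet_Ioo).2
            (integrableOn_const (by rw [Real.volume_Ioo]; exact ENNReal.ofReal_ne_top)))
          hf
      have hFint : Integrable F volume :=
        (ep.integrable_comp_emb e.measurableEmbedding).2 hHint
      -- Integral of |F|
      have hFabs : ∫ z, |F z| = L * Ir := by
        have h1 : ∫ z, |F z| = ∫ p, |H p| ∂(volume : Measure (ℝ × (Fin n → ℝ))) := by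
          simp only [hF]
          exact ep.integral_comp e.measurableEmbedding (fun p => |H p|)
        rw [h1, Measure.volume_eq_prod]
        have h2 : ∀ p : ℝ × (Fin n → ℝ), |H p| =
            (Ioo (-(L/2)) (L/2)).indicator (fun _ => (1:ℝ)) p.1 * |f p.2| := by
          intro p
          rw [hH, abs_mul]
          congr 1
          by_cases hp : p.1 ∈ Ioo (-(L/2)) (L/2) <;> simp [hp]
        simp_rw [h2]
        rw [integral_prod_mul (fun t => (Ioo (-(L/2)) (L/2)).indicator (fun _ => (1:ℝ)) t)
          (fun y => |f y|)]
        rw [integral_indicator_const (1:ℝ) measurableSet_Ioo]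
        rw [Real.volume_real_Ioo]
        rw [max_eq_left (by linarith)]
        simp only [smul_eq_mul, mul_one]
        congr 1
        ring
      -- pointwise values of ofReal |F|
      have hFg : ∀ p : ℝ × (Fin n → ℝ), ENNReal.ofReal |H p| =
          (Ioo (-(L/2)) (L/2)).indicator (fun _ => (1:ℝ≥0∞)) p.1 * g p.2 := by
        intro p
        by_cases hp : p.1 ∈ Ioo (-(L/2)) (L/2) <;>
          simp [hH, hg, hp, abs_mul, ENNReal.ofReal_mul]
      -- main pointwise estimate
      have claim : ∀ t : ℝ, ∀ x : Fin n → ℝ, x ∈ E R → |t| ≤ L/2 - R →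
          ENNReal.ofReal α < maxOp (n+1) (unitCube (n+1)) F (e.symm (t, x)) := by
        intro t x hx ht
        obtain ⟨s, hs0, hsR, hslt⟩ := hx
        set z : Fin (n+1) → ℝ := e.symm (t, x) with hz
        have hez : e z = (t, x) := e.apply_symm_apply _
        have hz0 : z 0 = t := by
          have := congrArg Prod.fst hez
          rwa [MeasurableEquiv.piFinSuccAbove_apply] at this
        have hztail : Fin.tail z = x := by
          have := congrArg Prod.snd hez
          rwa [MeasurableEquiv.piFinSuccAbove_apply] at this
        rw [maxOp_unitCube]
        have hball : ball z s = e ⁻¹' (Ioo (t - s) (t + s) ×ˢ ball x s) := by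
          rw [ball_succ_eq z hs0, hz0, hztail]
        -- numerator computation
        have hnum : (∫⁻ y in ball z s, ENNReal.ofReal |F y| ∂volume) =
            ENNReal.ofReal (2*s) * ∫⁻ y in ball x s, g y ∂volume := by
          rw [hball]
          have := ep.setLIntegral_comp_preimage_emb e.measurableEmbedding
            (fun p => ENNReal.ofReal |H p|) (Ioo (t - s) (t + s) ×ˢ ball x s)
          rw [hF]
          rw [this, Measure.volume_eq_prod, ← Measure.prod_restrict]
          simp_rw [hFg]
          rw [lintegral_prod_mul (f := fun t => (Ioo (-(L/2)) (L/2)).indicator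
              (fun _ => (1:ℝ≥0∞)) t) (g := g)
            ((measurable_const.indicator measurableSet_Ioo).aemeasurable)
            ((ENNReal.measurable_ofReal.comp_aemeasurable hf.abs.aemeasurable).restrict)]
          congr 1
          have hsub : Ioo (-(L/2)) (L/2) ∩ Ioo (t - s) (t + s) = Ioo (t-s) (t+s) := by
            rw [inter_eq_right]
            intro u hu
            rw [mem_Ioo] at hu ⊢
            have := abs_le.1 ht
            constructor <;> nlinarith [hu.1, hu.2]
          rw [lintegral_indicator measurableSet_Ioo, setLIntegral_one,
            Measure.restrict_apply measurableSet_Ioo, hsub, Real.volume_Ioo]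
          congr 1
          ring
        -- the denominator
        have hvol : volume (ball z s) = ENNReal.ofReal (2*s) * ENNReal.ofReal ((2*s)^n) := by
          rw [volume_ball_pi z hs0, pow_succ', ENNReal.ofReal_mul (by positivity)]
        refine lt_of_lt_of_le ?_ (le_iSup₂ s hs0)
        rw [hnum, hvol, ENNReal.mul_div_mul_left _ _ (by positivity) ENNReal.ofReal_ne_top]
        rw [ENNReal.lt_div_iff_mul_lt (Or.inl (by positivity)) (Or.inl ENNReal.ofReal_ne_top)]
        rwa [← volume_ball_pi x hs0]
      -- apply the (n+1)-dimensional inequality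
      have hsub2 : e ⁻¹' (Icc (-(L/2 - R)) (L/2 - R) ×ˢ E R) ⊆
          {w | ENNReal.ofReal α < maxOp (n+1) (unitCube (n+1)) F w} := by
        intro w hw
        rw [mem_preimage, Set.mem_prod] at hw
        have hw' := claim (e w).1 (e w).2 hw.2 (abs_le.2 ⟨(hw.1).1, (hw.1).2⟩)
        rwa [Prod.mk.eta, e.symm_apply_apply] at hw'
      have happ := hweak F hFint α hα
      have hm : volume (e ⁻¹' (Icc (-(L/2 - R)) (L/2 - R) ×ˢ E R)) =
          ENNReal.ofReal (L - 2*R) * volume (E R) := by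
        rw [← MeasurableEquiv.map_apply e, ep.map_eq, Measure.volume_eq_prod,
          Measure.prod_prod, Real.volume_Icc]
        congr 2
        ring
      calc ENNReal.ofReal (L - 2*R) * (ENNReal.ofReal α * volume (E R))
          = ENNReal.ofReal α * volume (e ⁻¹' (Icc (-(L/2 - R)) (L/2 - R) ×ˢ E R)) := by
            rw [hm]; ring
        _ ≤ ENNReal.ofReal α *
            volume {w | ENNReal.ofReal α < maxOp (n+1) (unitCube (n+1)) F w} := by
            exact mul_le_mul_right (measure_mono hsub2) _
        _ ≤ ENNReal.ofReal (c * ∫ z, |F z|) := happ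
        _ = ENNReal.ofReal L * Z := by
            rw [hFabs, hZ, show c * (L * Ir) = L * (c * Ir) by ring,
              ENNReal.ofReal_mul hL0.le]
    -- limiting argument in L
    set A : ℝ≥0∞ := ENNReal.ofReal α * volume (E R) with hA
    by_contra hcon
    push_neg at hcon
    have hAfin : A ≠ ∞ := by
      intro htop
      have := key (2*R + 1) (by linarith)
      rw [htop] at this
      simp only [show 2*R + 1 - 2*R = 1 by ring] at this
      rw [ENNReal.mul_top (by norm_num)] at this
      exact (lt_of_le_of_lt this (ENNReal.mul_lt_top ENNReal.ofReal_lt_top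
        ENNReal.ofReal_lt_top)).ne rfl
    have hZfin : Z ≠ ∞ := ENNReal.ofReal_ne_top
    set a : ℝ := A.toReal with ha
    set zz : ℝ := Z.toReal with hzz
    have hza : zz < a := by
      rw [ha, hzz]
      exact ENNReal.toReal_lt_toReal hZfin hAfin |>.2 hcon
    have ha0 : 0 < a := lt_of_le_of_lt (ENNReal.toReal_nonneg) hza
    have hkey' : ∀ L : ℝ, 2*R < L → (L - 2*R) * a ≤ L * zz := by
      intro L hL
      have h := key L hL
      calc (L - 2*R) * a = (ENNReal.ofReal (L - 2*R) * A).toReal := by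
            rw [ENNReal.toReal_mul, ENNReal.toReal_ofReal (by linarith), ha]
        _ ≤ (ENNReal.ofReal L * Z).toReal :=
            ENNReal.toReal_mono (ENNReal.mul_ne_top ENNReal.ofReal_ne_top hZfin) h
        _ = L * zz := by
            rw [ENNReal.toReal_mul, ENNReal.toReal_ofReal (by linarith), hzz]
    set Lb : ℝ := 2*R*a/(a - zz) + 2*R + 1 with hLb
    have hzz0 : 0 ≤ zz := ENNReal.toReal_nonneg
    have hLbgt : 2*R < Lb := by
      rw [hLb]
      have : 0 ≤ 2*R*a/(a - zz) := div_nonneg (by nlinarith) (by linarith)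
      linarith
    have hfrac : 2*R*a/(a - zz) * (a - zz) = 2*R*a :=
      div_mul_cancel₀ _ (by linarith)
    have hfin := hkey' Lb hLbgt
    rw [hLb] at hfin
    nlinarith [hfin, hza, ha0, hfrac, hR]
  -- conclude by continuity from below
  have hEU : {x | ENNReal.ofReal α < maxOp n (unitCube n) f x} = ⋃ k : ℕ, E ((k:ℝ)+1) := by
    ext x
    simp only [mem_setOf_eq, mem_iUnion]
    constructor
    · intro hx
      rw [maxOp_unitCube, lt_iSup_iff] at hx
      obtain ⟨s, hx⟩ := hx
      rw [lt_iSup_iff] at hx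
      obtain ⟨hs, hlt⟩ := hx
      obtain ⟨k, hk⟩ := exists_nat_gt s
      refine ⟨k, s, hs, by push_cast; linarith, ?_⟩
      rwa [ENNReal.lt_div_iff_mul_lt (Or.inl ?_) (Or.inl ?_)] at hlt
      · rw [volume_ball_pi x hs]; simpa using by positivity
      · rw [volume_ball_pi x hs]; exact ENNReal.ofReal_ne_top
    · rintro ⟨k, s, hs, _, hlt⟩
      rw [maxOp_unitCube, lt_iSup_iff]
      refine ⟨s, ?_⟩
      rw [lt_iSup_iff]
      refine ⟨hs, ?_⟩
      rw [ENNReal.lt_div_iff_mul_lt (Or.inl ?_) (Or.inl ?_)]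
      · exact hlt
      · rw [volume_ball_pi x hs]; simpa using by positivity
      · rw [volume_ball_pi x hs]; exact ENNReal.ofReal_ne_top
  have hmono : Monotone fun k : ℕ => E ((k:ℝ)+1) := by
    intro k l hkl x hx
    obtain ⟨s, hs0, hsR, hlt⟩ := hx
    exact ⟨s, hs0, by push_cast; have : (k:ℝ) ≤ l := Nat.cast_le.2 hkl; linarith, hlt⟩
  rw [hEU, hmono.measure_iUnion, ENNReal.mul_iSup]
  exact iSup_le fun k => main _ (by positivity)
end partC

section partA
variable {n : ℕ} (T : (Fin n → ℝ) ≃ₗ[ℝ] (Fin n → ℝ))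

noncomputable def Te : (Fin n → ℝ) ≃ᵐ (Fin n → ℝ) :=
  T.toContinuousLinearEquiv.toHomeomorph.toMeasurableEquiv

lemma Te_coe : (Te T : (Fin n → ℝ) → (Fin n → ℝ)) = ⇑T := rfl

noncomputable def Det : ℝ≥0∞ := ENNReal.ofReal |LinearMap.det (T : (Fin n → ℝ) →ₗ[ℝ] (Fin n → ℝ))|

lemma det_ne (T : (Fin n → ℝ) ≃ₗ[ℝ] (Fin n → ℝ)) :
    LinearMap.det (T : (Fin n → ℝ) →ₗ[ℝ] (Fin n → ℝ)) ≠ 0 :=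
  (LinearEquiv.isUnit_det' T).ne_zero

lemma Det_ne_zero : Det T ≠ 0 := by
  rw [Det]
  simp only [ne_eq, ENNReal.ofReal_eq_zero, not_le]
  exact abs_pos.2 (det_ne T)

lemma Det_ne_top : Det T ≠ ∞ := ENNReal.ofReal_ne_top

lemma volume_eq_smul_map :
    (volume : Measure (Fin n → ℝ)) = Det T • Measure.map (Te T) volume := by
  rw [Te_coe, show ⇑T = ⇑(T : (Fin n → ℝ) →ₗ[ℝ] (Fin n → ℝ)) from rfl,
    Measure.map_linearMap_addHaar_eq_smul_addHaar volume (det_ne T), smul_smul, Det,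
    ← ENNReal.ofReal_mul (abs_nonneg _), abs_inv, mul_inv_cancel₀
      (abs_ne_zero.2 (det_ne T)), ENNReal.ofReal_one, one_smul]

lemma volume_image (A : Set (Fin n → ℝ)) : volume (⇑T '' A) = Det T * volume A := by
  rw [show ⇑T '' A = ⇑(T : (Fin n → ℝ) →ₗ[ℝ] (Fin n → ℝ)) '' A from rfl,
    Measure.addHaar_image_linearMap, Det]

lemma lintegral_image (A : Set (Fin n → ℝ)) (hA : MeasurableSet A) (h : (Fin n → ℝ) → ℝ≥0∞) :
    ∫⁻ y in ⇑T '' A, h y ∂volume = Det T * ∫⁻ y in A, h (T y) ∂volume := by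
  have hTA : MeasurableSet (⇑T '' A) := by
    rw [← Te_coe]
    exact (MeasurableEquiv.measurableSet_image (Te T)).2 hA
  conv_lhs => rw [volume_eq_smul_map T]
  rw [Measure.restrict_smul, lintegral_smul_measure]
  congr 1
  rw [Measure.restrict_map (Te T).measurable hTA]
  rw [lintegral_map_equiv]
  have hpre : ⇑(Te T) ⁻¹' (⇑T '' A) = A := by
    rw [Te_coe]
    exact Set.preimage_image_eq A T.injective
  rw [hpre]
  rfl

lemma integral_abs_comp (f : (Fin n → ℝ) → ℝ) :
    ∫ x, |f x| = |LinearMap.det (T : (Fin n → ℝ) →ₗ[ℝ] (Fin n → ℝ))| * ∫ y, |f (T y)| := by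
  conv_lhs => rw [volume_eq_smul_map T]
  rw [integral_smul_measure, integral_map_equiv]
  rw [Det, ENNReal.toReal_ofReal (abs_nonneg _)]
  rfl

lemma integrable_comp_iff (f : (Fin n → ℝ) → ℝ) :
    Integrable f volume ↔ Integrable (fun y => f (T y)) volume := by
  conv_lhs => rw [volume_eq_smul_map T]
  rw [integrable_smul_measure (Det_ne_zero T) (Det_ne_top T)]
  rw [integrable_map_equiv]
  rfl

lemma maxOp_image (f : (Fin n → ℝ) → ℝ) (x : Fin n → ℝ) :
    maxOp n (⇑T '' unitCube n) f x = maxOp n (unitCube n) (fun y => f (T y)) (T.symm x) := by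
  rw [maxOp_def, maxOp_def]
  refine iSup_congr fun r => iSup_congr fun hr => ?_
  have himg : (fun b => x + r • b) '' (⇑T '' unitCube n) =
      ⇑T '' ((fun b => T.symm x + r • b) '' unitCube n) := by
    rw [image_image, image_image]
    refine image_congr fun b _ => ?_
    rw [map_add, _root_.map_smul, T.apply_symm_apply]
  rw [himg, image_add_smul_unitCube _ hr,
    lintegral_image T _ measurableSet_ball, volume_image, volume_unitCube]
  rw [show ENNReal.ofReal (r ^ n) * (Det T * 1) = Det T * (ENNReal.ofReal (r ^ n) * 1) by ring]
  exact ENNReal.mul_div_mul_left _ _ (Det_ne_zero T) (Det_ne_top T)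

lemma levelSet_image (f : (Fin n → ℝ) → ℝ) (α : ℝ≥0∞) :
    {x | α < maxOp n (⇑T '' unitCube n) f x} =
      ⇑T '' {y | α < maxOp n (unitCube n) (fun y => f (T y)) y} := by
  ext x
  simp only [mem_setOf_eq, maxOp_image T f x]
  constructor
  · intro h
    exact ⟨T.symm x, h, T.apply_symm_apply x⟩
  · rintro ⟨y, hy, rfl⟩
    rwa [T.symm_apply_apply]

/-- The weak-type set is invariant under linear changes of variables. -/
lemma weakSet_image_eq : weakSet n (⇑T '' unitCube n) = weakSet n (unitCube n) := by
  have key : ∀ c : ℝ, 0 < c → ∀ f : (Fin n → ℝ) → ℝ, ∀ α : ℝ,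
      ((ENNReal.ofReal α * volume {x | ENNReal.ofReal α < maxOp n (⇑T '' unitCube n) f x} ≤
        ENNReal.ofReal (c * ∫ x, |f x|)) ↔
      (ENNReal.ofReal α * volume {y | ENNReal.ofReal α <
          maxOp n (unitCube n) (fun y => f (T y)) y} ≤
        ENNReal.ofReal (c * ∫ y, |f (T y)|))) := by
    intro c hc f α
    rw [levelSet_image, volume_image, integral_abs_comp T f,
      show c * (|LinearMap.det (T : (Fin n → ℝ) →ₗ[ℝ] (Fin n → ℝ))| * ∫ y, |f (T y)|)
        = |LinearMap.det (T : (Fin n → ℝ) →ₗ[ℝ] (Fin n → ℝ))| * (c * ∫ y, |f (T y)|) by ring,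
      ENNReal.ofReal_mul (abs_nonneg _), ← Det,
      show ENNReal.ofReal α * (Det T * volume {y | ENNReal.ofReal α <
          maxOp n (unitCube n) (fun y => f (T y)) y})
        = Det T * (ENNReal.ofReal α * volume {y | ENNReal.ofReal α <
          maxOp n (unitCube n) (fun y => f (T y)) y}) by ring]
    exact ENNReal.mul_le_mul_iff_right (Det_ne_zero T) (Det_ne_top T)
  ext c
  rw [mem_weakSet_iff, mem_weakSet_iff]
  constructor
  · rintro ⟨hc, h⟩
    refine ⟨hc, fun f hf α hα => ?_⟩
    have hf' : Integrable (fun y => f (T.symm y)) volume := by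
      rw [integrable_comp_iff T]
      simpa using hf
    have := (key c hc (fun y => f (T.symm y)) α).1 (h _ hf' α hα)
    simpa using this
  · rintro ⟨hc, h⟩
    refine ⟨hc, fun f hf α hα => ?_⟩
    exact (key c hc f α).2 (h _ ((integrable_comp_iff T f).1 hf) α hα)
end partA

/-- For each `d ∈ ℕ \ {0}`, let `B_d ⊆ ℝ^d` be a `d`-dimensional open
parallelotope centered at zero, i.e., the image of the open unit cube `(-1/2,1/2)^d` under an
invertible linear transformation of `ℝ^d`. Then the best constants in the weak type `(1,1)`
inequality for the centered Hardy–Littlewood maximal operators satisfy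
`c_{d,B_d} ≤ c_{d+1,B_{d+1}}` for every `d ≥ 1`. -/
theorem bestConst_parallelotope_mono
    (B : ∀ d : ℕ, Set (Fin d → ℝ))
    (hB : ∀ d : ℕ, 1 ≤ d →
      ∃ T : (Fin d → ℝ) ≃ₗ[ℝ] (Fin d → ℝ), B d = T '' unitCube d)
    (d : ℕ) (hd : 1 ≤ d) :
    bestConst d (B d) ≤ bestConst (d + 1) (B (d + 1)) := by
  obtain ⟨T, hT⟩ := hB d hd
  obtain ⟨T', hT'⟩ := hB (d+1) (by omega)
  rw [bestConst_eq, bestConst_eq, hT, hT', weakSet_image_eq, weakSet_image_eq]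
  refine csInf_le_csInf ⟨0, fun c hc => (mem_weakSet_iff.1 hc).1.le⟩
    ⟨4^(d+1), pow_mem_weakSet (by omega)⟩ (weakSet_succ_subset hd)
end

section
/- Let Q_d = (−1/2,1/2)^d be the open unit cube in ℝ^d, let μ be a nonzero finite nonnegative Borel measure on ℝ^d with total mass k = μ(ℝ^d), let α > 0, and set L := (k/α)^{1/d}. Then: (a) for every x ∈ ℝ^d and every r ≥ L, μ(x + rQ_d)/r^d ≤ α, so any radius r witnessing M_{d,Q_d}μ(x) > α satisfies r < L; and (b) for every N > L, {x ∈ ℝ^d : M_{d,Q_d} μ(x) > α} × [−N + L, N − L] ⊆ {z ∈ ℝ^{d+1} : M_{d+1,Q_{d+1}} (μ × λ_{[−N,N]})(z) > α}, where μ × λ_{[−N,N]} is the product of μ with the restriction of one-dimensional Lebesgue measure to [−N, N]. -/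
open MeasureTheory Set
open scoped ENNReal

/-- The centered Hardy–Littlewood maximal function of a measure `μ` on `ℝ^d` associated to
the unit cube: `M_{d,Q_d} μ (x) = sup_{r>0} μ(x + rQ_d)/r^d` (the cube has volume `1`). -/
noncomputable def cubeMaxOp (d : ℕ) (μ : Measure (Fin d → ℝ)) (x : Fin d → ℝ) : ℝ≥0∞ :=
  ⨆ (r : ℝ) (_ : 0 < r),
    μ ((fun b => x + r • b) '' unitCube d) / ENNReal.ofReal (r ^ d)


lemma image_unitCube (n : ℕ) (z : Fin n → ℝ) (r : ℝ) (hr : 0 < r) :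
    (fun b => z + r • b) '' unitCube n
      = Set.univ.pi fun i => Set.Ioo (z i - r/2) (z i + r/2) := by
  ext y
  simp only [unitCube, Set.mem_image, Set.mem_pi, Set.mem_univ, forall_true_left, Set.mem_Ioo]
  constructor
  · rintro ⟨b, hb, rfl⟩ i
    have h := hb i
    simp only [Pi.add_apply, Pi.smul_apply, smul_eq_mul]
    constructor <;> nlinarith [h.1, h.2]
  · intro h
    refine ⟨fun i => (y i - z i)/r, fun i => ?_, ?_⟩
    · have hi := h i
      constructor
      · rw [lt_div_iff₀ hr]; nlinarith [hi.1]
      · rw [div_lt_iff₀ hr]; nlinarith [hi.2]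
    · funext i
      simp only [Pi.add_apply, Pi.smul_apply, smul_eq_mul]
      field_simp
      ring

lemma measurable_snoc_fn (d : ℕ) :
    Measurable (fun p : (Fin d → ℝ) × ℝ => (Fin.snoc p.1 p.2 : Fin (d+1) → ℝ)) := by
  apply measurable_pi_iff.2
  intro i
  refine Fin.lastCases ?_ ?_ i
  · simpa [Fin.snoc_last] using (measurable_snd : Measurable fun p : (Fin d → ℝ) × ℝ => p.2)
  · intro j
    simpa [Fin.snoc_castSucc, Function.comp_def] using (measurable_pi_apply j).comp
      (measurable_fst : Measurable fun p : (Fin d → ℝ) × ℝ => p.1)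

/-- Let `Q_d = (-1/2,1/2)^d`, let `μ` be a nonzero finite nonnegative Borel
measure on `ℝ^d` with total mass `k = μ(ℝ^d)`, let `α > 0`, and set `L = (k/α)^(1/d)`. Then:
(a) for every `x ∈ ℝ^d` and every `r ≥ L`, `μ(x + rQ_d)/r^d ≤ α`; and
(b) for every `N > L`,
`{M_{d,Q_d} μ > α} × [-N+L, N-L] ⊆ {M_{d+1,Q_{d+1}} (μ × λ_{[-N,N]}) > α}`,
where `μ × λ_{[-N,N]}` is the product of `μ` with the restriction of one-dimensional Lebesgue
measure to `[-N,N]`, a point `(x, t)` of `ℝ^d × ℝ` being identified with the point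
`Fin.snoc x t` of `ℝ^{d+1}`. -/
theorem cube_maximal_dimension_lift (d : ℕ) (hd : 0 < d)
    (μ : Measure (Fin d → ℝ)) [IsFiniteMeasure μ] (hμ : μ ≠ 0)
    (α : ℝ) (hα : 0 < α) (k L : ℝ)
    (hk : k = (μ Set.univ).toReal)
    (hL : L = (k / α) ^ ((1 : ℝ) / d)) :
    (∀ (x : Fin d → ℝ) (r : ℝ), L ≤ r →
      μ ((fun b => x + r • b) '' unitCube d) / ENNReal.ofReal (r ^ d) ≤
        ENNReal.ofReal α) ∧
    (∀ N : ℝ, L < N → ∀ (x : Fin d → ℝ) (t : ℝ),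
      ENNReal.ofReal α < cubeMaxOp d μ x → t ∈ Set.Icc (-N + L) (N - L) →
      ENNReal.ofReal α <
        cubeMaxOp (d + 1)
          ((μ.prod (volume.restrict (Set.Icc (-N) N))).map
            (fun p : (Fin d → ℝ) × ℝ => Fin.snoc p.1 p.2))
          (Fin.snoc x t)) := by
  have hk0 : 0 < k := by
    rw [hk]
    exact ENNReal.toReal_pos (by simpa [Measure.measure_univ_eq_zero] using hμ)
      (measure_ne_top μ _)
  have hkα : (0:ℝ) < k / α := div_pos hk0 hα
  have hL0 : 0 < L := by rw [hL]; exact Real.rpow_pos_of_pos hkα _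
  have hLd : L ^ d = k / α := by
    rw [hL, ← Real.rpow_natCast ((k/α) ^ ((1:ℝ)/d)) d, ← Real.rpow_mul hkα.le,
      one_div, inv_mul_cancel₀ (by exact_mod_cast hd.ne' : (d:ℝ) ≠ 0), Real.rpow_one]
  have parta : ∀ (x : Fin d → ℝ) (r : ℝ), L ≤ r →
      μ ((fun b => x + r • b) '' unitCube d) / ENNReal.ofReal (r ^ d) ≤
        ENNReal.ofReal α := by
    intro x r hr
    have hr0 : 0 < r := hL0.trans_le hr
    have hrd : k / α ≤ r ^ d := by
      rw [← hLd]; exact pow_le_pow_left₀ hL0.le hr d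
    have hkle : k ≤ α * r ^ d := by
      rw [div_le_iff₀ hα] at hrd; linarith
    apply ENNReal.div_le_of_le_mul
    calc μ ((fun b => x + r • b) '' unitCube d) ≤ μ Set.univ :=
          measure_mono (Set.subset_univ _)
      _ = ENNReal.ofReal k := by rw [hk, ENNReal.ofReal_toReal (measure_ne_top μ _)]
      _ ≤ ENNReal.ofReal (α * r ^ d) := ENNReal.ofReal_le_ofReal hkle
      _ = ENNReal.ofReal α * ENNReal.ofReal (r ^ d) := ENNReal.ofReal_mul hα.le
  refine ⟨parta, ?_⟩
  intro N hN x t hx ht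
  obtain ⟨r, hr⟩ := lt_iSup_iff.1 hx
  obtain ⟨hr0, hterm⟩ := lt_iSup_iff.1 hr
  have hrL : r < L := by
    by_contra h
    push_neg at h
    exact absurd hterm (not_lt.2 (parta x r h))
  -- the small interval fits in [-N, N]
  have htsub : Set.Ioo (t - r/2) (t + r/2) ⊆ Set.Icc (-N) N := by
    intro s hs
    obtain ⟨ht1, ht2⟩ := ht
    constructor <;> [nlinarith [hs.1]; nlinarith [hs.2]]
  set f : (Fin d → ℝ) × ℝ → (Fin (d+1) → ℝ) := fun p => Fin.snoc p.1 p.2 with hf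
  set ν := volume.restrict (Set.Icc (-N) N) with hν
  have himg : (fun b => Fin.snoc x t + r • b) '' unitCube (d+1)
      = Set.univ.pi fun i => Set.Ioo ((Fin.snoc x t : Fin (d+1) → ℝ) i - r/2)
          ((Fin.snoc x t : Fin (d+1) → ℝ) i + r/2) :=
    image_unitCube (d+1) _ r hr0
  have hApre : f ⁻¹' ((fun b => Fin.snoc x t + r • b) '' unitCube (d+1))
      = ((fun b => x + r • b) '' unitCube d) ×ˢ Set.Ioo (t - r/2) (t + r/2) := by
    rw [himg, image_unitCube d x r hr0]
    ext p
    simp only [Set.mem_preimage, Set.mem_pi, Set.mem_univ, forall_true_left, Set.mem_prod,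
      Set.mem_Ioo, hf]
    constructor
    · intro h
      refine ⟨fun j => ?_, ?_⟩
      · simpa [Fin.snoc_castSucc] using h j.castSucc
      · simpa [Fin.snoc_last] using h (Fin.last d)
    · rintro ⟨h1, h2⟩ i
      refine Fin.lastCases ?_ (fun j => ?_) i
      · simpa [Fin.snoc_last] using h2
      · simpa [Fin.snoc_castSucc] using h1 j
  have hAmeas : MeasurableSet ((fun b => Fin.snoc x t + r • b) '' unitCube (d+1)) := by
    rw [himg]
    exact MeasurableSet.univ_pi fun i => measurableSet_Ioo
  have hmap : ((μ.prod ν).map f) ((fun b => Fin.snoc x t + r • b) '' unitCube (d+1))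
      = μ ((fun b => x + r • b) '' unitCube d) * ENNReal.ofReal r := by
    rw [Measure.map_apply (measurable_snoc_fn d) hAmeas, hApre, Measure.prod_prod]
    congr 1
    rw [hν, Measure.restrict_apply measurableSet_Ioo,
      Set.inter_eq_self_of_subset_left htsub, Real.volume_Ioo]
    congr 1
    ring
  have hvalue : ((μ.prod ν).map f) ((fun b => Fin.snoc x t + r • b) '' unitCube (d+1))
      / ENNReal.ofReal (r ^ (d+1))
      = μ ((fun b => x + r • b) '' unitCube d) / ENNReal.ofReal (r ^ d) := by
    rw [hmap, pow_succ, ENNReal.ofReal_mul (by positivity)]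
    exact ENNReal.mul_div_mul_right _ _ (by simp [hr0]) ENNReal.ofReal_ne_top
  calc ENNReal.ofReal α
      < μ ((fun b => x + r • b) '' unitCube d) / ENNReal.ofReal (r ^ d) := hterm
    _ = ((μ.prod ν).map f) ((fun b => Fin.snoc x t + r • b) '' unitCube (d+1))
        / ENNReal.ofReal (r ^ (d+1)) := hvalue.symm
    _ ≤ _ := by
        apply le_iSup_of_le r
        apply le_iSup_of_le hr0
        exact le_rfl
end
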